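/- Let (F_k)_{k∈[C]} be function classes from X to ℝ, G a set of classifiers from X to [C], and F_G the associated piecewise class. Then for any q ∈ [1,∞), sample x_1,...,x_n, and ε > 0, N(ε, F_G, d_q) ≤ Π_G(n) · ∏_{k=1}^C N(ε / C^{1/q}, F_k, d_q). -/

import Mathlib

/-- Empirical L_q pseudo-metric on a sample. -/
noncomputable def empDist {Z : Type*} {n : ℕ} (q : ℝ) (z : Fin n → Z)
    (f g : Z → ℝ) : ℝ :=
  ((n : ℝ)⁻¹ * ∑ i, |f (z i) - g (z i)| ^ q) ^ (1 / q)

/-- Empirical L_∞ pseudo-metric on a sample. -/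
noncomputable def empDistInf {Z : Type*} {n : ℕ} (z : Fin n → Z)
    (f g : Z → ℝ) : ℝ :=
  ⨆ i, |f (z i) - g (z i)|

/-- Covering number: smallest cardinality of a proper ε-net of F
(distance at most ε). -/
noncomputable def covN {α : Type*} (ε : ℝ) (F : Set α) (d : α → α → ℝ) : ℕ∞ :=
  sInf {m : ℕ∞ | ∃ H : Finset α, ↑H ⊆ F ∧ (∀ f ∈ F, ∃ h ∈ H, d f h ≤ ε) ∧
    (H.card : ℕ∞) = m}

lemma covN_le_card {α : Type*} {ε : ℝ} {F : Set α} {d : α → α → ℝ}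
    {H : Finset α} (h1 : ↑H ⊆ F) (h2 : ∀ f ∈ F, ∃ h ∈ H, d f h ≤ ε) :
    covN ε F d ≤ (H.card : ℕ∞) :=
  sInf_le ⟨H, h1, h2, rfl⟩

lemma covN_ne_zero {α : Type*} {ε : ℝ} {F : Set α} {d : α → α → ℝ}
    (hF : F.Nonempty) : covN ε F d ≠ 0 := by
  intro h0
  rw [covN, ENat.sInf_eq_zero] at h0
  obtain ⟨H, _, hnet, hcard⟩ := h0
  obtain ⟨f, hf⟩ := hF
  obtain ⟨h, hh, -⟩ := hnet f hf
  have : H = ∅ := Finset.card_eq_zero.mp (by exact_mod_cast hcard)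
  simp [this] at hh

lemma covN_attained {α : Type*} {ε : ℝ} {F : Set α} {d : α → α → ℝ}
    (htop : covN ε F d ≠ ⊤) :
    ∃ H : Finset α, ↑H ⊆ F ∧ (∀ f ∈ F, ∃ h ∈ H, d f h ≤ ε) ∧
      (H.card : ℕ∞) ≤ covN ε F d := by
  have hlt : covN ε F d < covN ε F d + 1 :=
    (ENat.lt_add_one_iff htop).mpr le_rfl
  rw [covN] at hlt
  conv at hlt => rw [sInf_lt_iff]
  obtain ⟨m, hm, hmlt⟩ := hlt
  obtain ⟨H, h1, h2, h3⟩ := hm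
  exact ⟨H, h1, h2, by rw [h3]; exact (ENat.lt_add_one_iff htop).mp hmlt⟩

theorem covN_pws_q {X : Type*} (C n : ℕ) (hC : 0 < C) (hn : 0 < n)
    (F : Fin C → Set (X → ℝ)) (G : Set (X → Fin C)) (x : Fin n → X)
    (q ε : ℝ) (hq : 1 ≤ q) (hε : 0 < ε) :
    covN ε
      {f : X → ℝ | ∃ g ∈ G, ∃ fk : Fin C → X → ℝ, (∀ k, fk k ∈ F k) ∧
        f = fun w => fk (g w) w}
      (empDist q x)
      ≤ (Set.ncard {c : Fin n → Fin C | ∃ g ∈ G, c = fun i => g (x i)} : ℕ∞) *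
          ∏ k : Fin C, covN (ε / (C : ℝ) ^ ((1 : ℝ) / q)) (F k) (empDist q x) := by
  classical
  set FG : Set (X → ℝ) := {f : X → ℝ | ∃ g ∈ G, ∃ fk : Fin C → X → ℝ,
    (∀ k, fk k ∈ F k) ∧ f = fun w => fk (g w) w} with hFGdef
  set PS : Set (Fin n → Fin C) := {c : Fin n → Fin C | ∃ g ∈ G, c = fun i => g (x i)}
    with hPSdef
  have hq0 : 0 < q := lt_of_lt_of_le one_pos hq
  set ε' : ℝ := ε / (C : ℝ) ^ ((1 : ℝ) / q) with hε'def
  have hCpos : (0 : ℝ) < (C : ℝ) := by exact_mod_cast hC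
  have hCq : (0 : ℝ) < (C : ℝ) ^ ((1 : ℝ) / q) := Real.rpow_pos_of_pos hCpos _
  have hε' : 0 < ε' := div_pos hε hCq
  -- key: C * ε'^q = ε^q
  have hkey : (C : ℝ) * ε' ^ q = ε ^ q := by
    rw [hε'def, Real.div_rpow hε.le hCq.le, ← Real.rpow_mul (Nat.cast_nonneg C),
      one_div_mul_cancel hq0.ne', Real.rpow_one]
    field_simp
  by_cases hne : FG.Nonempty
  · obtain ⟨f0, g0, hg0, fk0, hfk0, -⟩ := hne
    have hFk : ∀ k, (F k).Nonempty := fun k => ⟨fk0 k, hfk0 k⟩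
    have hPSne : PS.Nonempty := ⟨fun i => g0 (x i), g0, hg0, rfl⟩
    have hPSfin : PS.Finite := Set.toFinite _
    have hPSn0 : (Set.ncard PS : ℕ∞) ≠ 0 := by
      exact_mod_cast ((Set.ncard_pos hPSfin).mpr hPSne).ne'
    by_cases htop : ∃ k, covN ε' (F k) (empDist q x) = ⊤
    · obtain ⟨k0, hk0⟩ := htop
      have hprod : ∏ k : Fin C, covN ε' (F k) (empDist q x) = ⊤ := by
        rw [← Finset.mul_prod_erase Finset.univ _ (Finset.mem_univ k0), hk0]
        rw [ENat.top_mul]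
        exact Finset.prod_ne_zero_iff.mpr fun k _ => covN_ne_zero (hFk k)
      rw [hprod, ENat.mul_top hPSn0]
      exact le_top
    · push_neg at htop
      choose Hk hHk1 hHk2 hHk3 using fun k => covN_attained (htop k)
      -- representative classifier for each pattern
      have hrep : ∀ c ∈ PS, ∃ g ∈ G, c = fun i => g (x i) := fun c hc => hc
      choose gc hgc1 hgc2 using hrep
      set T : Finset (Fin n → Fin C) := hPSfin.toFinset with hTdef
      have hTmem : ∀ c, c ∈ T ↔ c ∈ PS := fun c => hPSfin.mem_toFinset
      set H : Finset (X → ℝ) :=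
        (T.attach ×ˢ Fintype.piFinset Hk).image
          (fun p => fun w => p.2 (gc p.1.1 ((hTmem p.1.1).mp p.1.2) w) w) with hHdef
      have hsub : ↑H ⊆ FG := by
        intro f hf
        simp only [hHdef, Finset.coe_image, Set.mem_image, Finset.mem_coe,
          Finset.mem_product, Fintype.mem_piFinset] at hf
        obtain ⟨⟨⟨c, hcT⟩, h⟩, ⟨-, hh⟩, rfl⟩ := hf
        exact ⟨gc c ((hTmem c).mp hcT), hgc1 c _,
          fun k => h k, fun k => hHk1 k (hh k), rfl⟩
      have hnet : ∀ f ∈ FG, ∃ h ∈ H, empDist q x f h ≤ ε := by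
        intro f hf
        obtain ⟨g, hg, fk, hfk, rfl⟩ := hf
        choose hk hk1 hk2 using fun k => hHk2 k (fk k) (hfk k)
        set c : Fin n → Fin C := fun i => g (x i) with hcdef
        have hcPS : c ∈ PS := ⟨g, hg, rfl⟩
        have hcT : c ∈ T := (hTmem c).mpr hcPS
        refine ⟨fun w => hk (gc c ((hTmem c).mp hcT) w) w, ?_, ?_⟩
        · simp only [hHdef, Finset.mem_image]
          exact ⟨⟨⟨c, hcT⟩, hk⟩, Finset.mem_product.mpr
            ⟨Finset.mem_attach _ _, Fintype.mem_piFinset.mpr fun k => hk1 k⟩, rfl⟩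
        · -- distance bound
          have hpat : ∀ i, gc c ((hTmem c).mp hcT) (x i) = g (x i) := by
            intro i
            have := hgc2 c ((hTmem c).mp hcT)
            exact (congrFun this i).symm
          have hA : ((n : ℝ)⁻¹ *
              ∑ i, |fk (g (x i)) (x i) - hk (gc c ((hTmem c).mp hcT) (x i)) (x i)| ^ q)
              ≤ ε ^ q := by
            have hsum : ∀ i : Fin n,
                |fk (g (x i)) (x i) - hk (gc c ((hTmem c).mp hcT) (x i)) (x i)| ^ q ≤
                ∑ k : Fin C, |fk k (x i) - hk k (x i)| ^ q := by
              intro i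
              rw [hpat i]
              exact Finset.single_le_sum
                (f := fun k => |fk k (x i) - hk k (x i)| ^ q)
                (fun k _ => Real.rpow_nonneg (abs_nonneg _) q) (Finset.mem_univ (g (x i)))
            calc ((n : ℝ)⁻¹ * ∑ i, |fk (g (x i)) (x i) -
                    hk (gc c ((hTmem c).mp hcT) (x i)) (x i)| ^ q)
                ≤ (n : ℝ)⁻¹ * ∑ i, ∑ k : Fin C, |fk k (x i) - hk k (x i)| ^ q := by
                  apply mul_le_mul_of_nonneg_left (Finset.sum_le_sum fun i _ => hsum i)
                  positivity
              _ = ∑ k : Fin C, (n : ℝ)⁻¹ * ∑ i, |fk k (x i) - hk k (x i)| ^ q := by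
                  rw [Finset.sum_comm, Finset.mul_sum]
              _ ≤ ∑ k : Fin C, ε' ^ q := by
                  apply Finset.sum_le_sum
                  intro k _
                  have hBnn : (0 : ℝ) ≤ (n : ℝ)⁻¹ * ∑ i, |fk k (x i) - hk k (x i)| ^ q := by
                    apply mul_nonneg (by positivity)
                    exact Finset.sum_nonneg fun i _ => Real.rpow_nonneg (abs_nonneg _) q
                  have := hk2 k
                  rw [empDist] at this
                  calc (n : ℝ)⁻¹ * ∑ i, |fk k (x i) - hk k (x i)| ^ q
                      = (((n : ℝ)⁻¹ * ∑ i, |fk k (x i) - hk k (x i)| ^ q) ^ ((1:ℝ)/q)) ^ q := by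
                        rw [← Real.rpow_mul hBnn, one_div_mul_cancel hq0.ne',
                          Real.rpow_one]
                    _ ≤ ε' ^ q := Real.rpow_le_rpow (Real.rpow_nonneg hBnn _) this hq0.le
              _ = (C : ℝ) * ε' ^ q := by
                  rw [Finset.sum_const, Finset.card_univ, Fintype.card_fin, nsmul_eq_mul]
              _ = ε ^ q := hkey
          rw [empDist]
          calc ((n : ℝ)⁻¹ * ∑ i, |fk (g (x i)) (x i) -
                  hk (gc c ((hTmem c).mp hcT) (x i)) (x i)| ^ q) ^ ((1:ℝ)/q)
              ≤ (ε ^ q) ^ ((1:ℝ)/q) := by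
                apply Real.rpow_le_rpow _ hA (by positivity)
                apply mul_nonneg (by positivity)
                exact Finset.sum_nonneg fun i _ => Real.rpow_nonneg (abs_nonneg _) q
            _ = ε := by
                rw [← Real.rpow_mul hε.le, mul_one_div, div_self hq0.ne', Real.rpow_one]
      calc covN ε FG (empDist q x) ≤ (H.card : ℕ∞) := covN_le_card hsub hnet
        _ ≤ ((T.attach ×ˢ Fintype.piFinset Hk).card : ℕ∞) := by
            exact_mod_cast Finset.card_image_le
        _ = ((T.card * ∏ k, (Hk k).card : ℕ) : ℕ∞) := by
            rw [Finset.card_product, Finset.card_attach, Fintype.card_piFinset]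
        _ ≤ (Set.ncard PS : ℕ∞) * ∏ k : Fin C, covN ε' (F k) (empDist q x) := by
            push_cast
            apply mul_le_mul'
            · rw [Set.ncard_eq_toFinset_card PS hPSfin]
            · exact Finset.prod_le_prod' fun k _ => hHk3 k
  · -- FG empty
    have h0 : covN ε FG (empDist q x) ≤ (Finset.card (∅ : Finset (X → ℝ)) : ℕ∞) := by
      apply covN_le_card (by simp)
      intro f hf
      exact absurd ⟨f, hf⟩ hne
    simp only [Finset.card_empty, Nat.cast_zero, nonpos_iff_eq_zero] at h0
    rw [h0]
    exact zero_le
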